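/- For all reals x, y > 0 with x ≠ y and every real p with 0 < p < 1, the two-variable Wigner–Yanase–Dyson function satisfies W_p(x,y) ≤ K(x/y)^{p(1-p)} · L(x,y), where K is the Kantorovich constant. -/

import Mathlib

open Real Set Filter Topology

private lemma aux_nonneg (f f' : ℝ → ℝ) (hf : ∀ t, HasDerivAt f (f' t) t)
    (h0 : f 0 = 0) (hd : ∀ t, 0 < t → 0 ≤ f' t) : ∀ t, 0 ≤ t → 0 ≤ f t := by
  have hm : MonotoneOn f (Ici 0) := by
    apply monotoneOn_of_deriv_nonneg (convex_Ici 0)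
      (fun t _ => (hf t).continuousAt.continuousWithinAt)
    · intro t _; exact (hf t).differentiableAt.differentiableWithinAt
    · intro t ht
      rw [interior_Ici, mem_Ioi] at ht
      rw [(hf t).deriv]; exact hd t ht
  intro t ht
  calc (0:ℝ) = f 0 := h0.symm
  _ ≤ f t := hm self_mem_Ici ht ht

-- L0 : sinh t ≤ t * cosh t for t ≥ 0
private lemma sinh_le_mul_cosh {t : ℝ} (ht : 0 ≤ t) : Real.sinh t ≤ t * Real.cosh t := by
  have := aux_nonneg (fun t => t * Real.cosh t - Real.sinh t)
    (fun t => t * Real.sinh t)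
    (fun t => by
      have h1 : HasDerivAt (fun t : ℝ => t * Real.cosh t - Real.sinh t)
          (1 * Real.cosh t + t * Real.sinh t - Real.cosh t) t :=
        ((hasDerivAt_id t).mul (Real.hasDerivAt_cosh t)).sub (Real.hasDerivAt_sinh t)
      convert h1 using 1; ring)
    (by simp)
    (fun t ht => by positivity)
    t ht
  linarith [this]

-- Lemma 1 : 2 sinh² t ≤ t sinh t cosh t + t²  (t ≥ 0)
private lemma two_sinh_sq_le {t : ℝ} (ht : 0 ≤ t) :
    2 * Real.sinh t ^ 2 ≤ t * Real.sinh t * Real.cosh t + t ^ 2 := by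
  have h3 : ∀ t : ℝ, 0 ≤ t →
      0 ≤ 2 + 4 * t * Real.sinh t * Real.cosh t - 2 * (Real.cosh t ^ 2 + Real.sinh t ^ 2) := by
    apply aux_nonneg _ (fun t => 4 * t * (Real.cosh t ^ 2 + Real.sinh t ^ 2)
      - 4 * Real.sinh t * Real.cosh t)
    · intro t
      have h : HasDerivAt (fun t : ℝ => 2 + 4 * t * Real.sinh t * Real.cosh t
          - 2 * (Real.cosh t ^ 2 + Real.sinh t ^ 2))
          (((4 * 1 * Real.sinh t + 4 * t * Real.cosh t) * Real.cosh t
            + 4 * t * Real.sinh t * Real.sinh t)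
            - 2 * (2 * Real.cosh t * Real.sinh t + 2 * Real.sinh t * Real.cosh t)) t := by
        have ha : HasDerivAt (fun t : ℝ => 4 * t * Real.sinh t)
            (4 * 1 * Real.sinh t + 4 * t * Real.cosh t) t :=
          ((hasDerivAt_id t).const_mul 4 |>.mul (Real.hasDerivAt_sinh t))
        have hb := (ha.mul (Real.hasDerivAt_cosh t))
        have hc : HasDerivAt (fun t : ℝ => Real.cosh t ^ 2 + Real.sinh t ^ 2)
            (2 * Real.cosh t * Real.sinh t + 2 * Real.sinh t * Real.cosh t) t := by
          have := ((Real.hasDerivAt_cosh t).pow 2).add ((Real.hasDerivAt_sinh t).pow 2)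
          convert this using 1 <;> first | rfl | ring1 | (push_cast; ring1) | (simp only [id_eq]; push_cast; ring1) | (simp only [id_eq]; push_cast; norm_num)
        have := ((hasDerivAt_const t 2).add hb).sub (hc.const_mul 2)
        convert this using 1 <;> first | rfl | ring1 | (push_cast; ring1) | (simp only [id_eq]; push_cast; ring1) | (simp only [id_eq]; push_cast; norm_num)
      convert h using 1; ring
    · simp
    · intro t ht
      have h0 := sinh_le_mul_cosh ht.le
      have h1 : Real.sinh t * Real.cosh t ≤ t * (Real.cosh t ^ 2 + Real.sinh t ^ 2) := by
        have hc := Real.cosh_pos t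
        have : Real.sinh t * Real.cosh t ≤ (t * Real.cosh t) * Real.cosh t := by nlinarith
        nlinarith [Real.sinh_nonneg_iff.2 ht.le, sq_nonneg (Real.sinh t)]
      nlinarith
  have h2 : ∀ t : ℝ, 0 ≤ t →
      0 ≤ t * (Real.cosh t ^ 2 + Real.sinh t ^ 2) + 2 * t - 3 * Real.sinh t * Real.cosh t := by
    apply aux_nonneg _ (fun t => 2 + 4 * t * Real.sinh t * Real.cosh t
      - 2 * (Real.cosh t ^ 2 + Real.sinh t ^ 2))
    · intro t
      have ha : HasDerivAt (fun t : ℝ => t * (Real.cosh t ^ 2 + Real.sinh t ^ 2))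
          (1 * (Real.cosh t ^ 2 + Real.sinh t ^ 2)
            + t * (2 * Real.cosh t * Real.sinh t + 2 * Real.sinh t * Real.cosh t)) t := by
        have := (hasDerivAt_id t).mul (((Real.hasDerivAt_cosh t).pow 2).add
          ((Real.hasDerivAt_sinh t).pow 2))
        convert this using 1 <;> first | rfl | ring1 | (push_cast; ring1) | (simp only [id_eq]; push_cast; ring1) | (simp only [id_eq]; push_cast; norm_num)
      have hb : HasDerivAt (fun t : ℝ => 3 * Real.sinh t * Real.cosh t)
          (3 * Real.cosh t * Real.cosh t + 3 * Real.sinh t * Real.sinh t) t := by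
        have := ((Real.hasDerivAt_sinh t).const_mul 3).mul (Real.hasDerivAt_cosh t)
        convert this using 1 <;> first | rfl | ring1 | (push_cast; ring1) | (simp only [id_eq]; push_cast; ring1) | (simp only [id_eq]; push_cast; norm_num)
      have := (ha.add ((hasDerivAt_id t).const_mul 2)).sub hb
      convert this using 1 <;> first | rfl | ring1 | (push_cast; ring1) | (simp only [id_eq]; push_cast; ring1) | (simp only [id_eq]; push_cast; norm_num)
    · norm_num
    · exact fun t ht => h3 t ht.le
  have hder : ∀ t : ℝ, HasDerivAt
      (fun t : ℝ => t * Real.sinh t * Real.cosh t + t ^ 2 - 2 * Real.sinh t ^ 2)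
      (t * (Real.cosh t ^ 2 + Real.sinh t ^ 2) + 2 * t - 3 * Real.sinh t * Real.cosh t) t := by
    intro t
    have ha : HasDerivAt (fun t : ℝ => t * Real.sinh t * Real.cosh t)
        ((1 * Real.sinh t + t * Real.cosh t) * Real.cosh t
          + t * Real.sinh t * Real.sinh t) t :=
      ((hasDerivAt_id t).mul (Real.hasDerivAt_sinh t)).mul (Real.hasDerivAt_cosh t)
    have hb : HasDerivAt (fun t : ℝ => 2 * Real.sinh t ^ 2)
        (2 * (2 * Real.sinh t * Real.cosh t)) t := by
      have := ((Real.hasDerivAt_sinh t).pow 2).const_mul 2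
      convert this using 1 <;> first | rfl | ring1 | (push_cast; ring1) | (simp only [id_eq]; push_cast; ring1) | (simp only [id_eq]; push_cast; norm_num)
    have := (ha.add ((hasDerivAt_pow 2 t))).sub hb
    convert this using 1 <;> first | rfl | ring1 | (push_cast; ring1) | (simp only [id_eq]; push_cast; ring1) | (simp only [id_eq]; push_cast; norm_num)
  have h1 := aux_nonneg _ _ hder (by norm_num) (fun t ht => h2 t ht.le) t ht
  linarith

-- Lemma 2 : N(t) = (t cosh t - sinh t)/(t² sinh t) is antitone on (0,∞)
private lemma N_hasDeriv {t : ℝ} (ht : 0 < t) :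
    HasDerivAt (fun t : ℝ => (t * Real.cosh t - Real.sinh t) / (t ^ 2 * Real.sinh t))
      ((t * Real.sinh t * (t ^ 2 * Real.sinh t)
        - (t * Real.cosh t - Real.sinh t) * (2 * t * Real.sinh t + t ^ 2 * Real.cosh t))
        / (t ^ 2 * Real.sinh t) ^ 2) t := by
  have hden : t ^ 2 * Real.sinh t ≠ 0 := by
    have := Real.sinh_pos_iff.2 ht; positivity
  have hnum : HasDerivAt (fun t : ℝ => t * Real.cosh t - Real.sinh t)
      (t * Real.sinh t) t := by
    have := ((hasDerivAt_id t).mul (Real.hasDerivAt_cosh t)).sub (Real.hasDerivAt_sinh t)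
    convert this using 1 <;> first | rfl | ring1 | (simp only [id_eq]; push_cast; ring1)
  have hden' : HasDerivAt (fun t : ℝ => t ^ 2 * Real.sinh t)
      (2 * t * Real.sinh t + t ^ 2 * Real.cosh t) t := by
    have := (hasDerivAt_pow 2 t).mul (Real.hasDerivAt_sinh t)
    convert this using 1 <;> first | rfl | ring1 | (simp only [id_eq]; push_cast; ring1)
  exact hnum.div hden' hden

private lemma N_antitone : AntitoneOn
    (fun t : ℝ => (t * Real.cosh t - Real.sinh t) / (t ^ 2 * Real.sinh t)) (Set.Ioi 0) := by
  apply antitoneOn_of_deriv_nonpos (convex_Ioi 0)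
  · exact fun t ht => (N_hasDeriv ht).continuousAt.continuousWithinAt
  · intro t ht
    rw [interior_Ioi] at ht
    exact (N_hasDeriv ht).differentiableAt.differentiableWithinAt
  · intro t ht
    rw [interior_Ioi, Set.mem_Ioi] at ht
    rw [(N_hasDeriv ht).deriv]
    apply div_nonpos_of_nonpos_of_nonneg _ (sq_nonneg _)
    have h1 := two_sinh_sq_le ht.le
    have hs := Real.sinh_pos_iff.2 ht
    have hc := Real.cosh_sq t
    have key : 0 ≤ t * (t * Real.sinh t * Real.cosh t + t ^ 2 - 2 * Real.sinh t ^ 2) :=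
      mul_nonneg ht.le (by linarith)
    have hc3 : t ^ 3 * Real.cosh t ^ 2 = t ^ 3 * (Real.sinh t ^ 2 + 1) := by rw [hc]
    nlinarith [key, hc3]

private lemma step2 {p v : ℝ} (hp : 0 < p) (hp1 : p ≤ 1) (hv : 0 < v) :
    p ^ 2 * (Real.cosh v / Real.sinh v - 1 / v) ≤
      p * (Real.cosh (p * v) / Real.sinh (p * v)) - 1 / v := by
  have hA : 0 < p * v := mul_pos hp hv
  have hAv : p * v ≤ v := by nlinarith
  have hsv := Real.sinh_pos_iff.2 hv
  have hsA := Real.sinh_pos_iff.2 hA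
  have hN := N_antitone (Set.mem_Ioi.2 hA) (Set.mem_Ioi.2 hv) hAv
  simp only at hN
  rw [div_le_div_iff₀ (by positivity) (by positivity)] at hN
  have e1 : p ^ 2 * (Real.cosh v / Real.sinh v - 1 / v)
      = p ^ 2 * (v * Real.cosh v - Real.sinh v) / (v * Real.sinh v) := by
    field_simp
  have e2 : p * (Real.cosh (p * v) / Real.sinh (p * v)) - 1 / v
      = (p * v * Real.cosh (p * v) - Real.sinh (p * v)) / (v * Real.sinh (p * v)) := by
    field_simp
  rw [e1, e2, div_le_div_iff₀ (by positivity) (by positivity)]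
  nlinarith [hN, mul_pos hv hsv, mul_pos hv hsA]

private lemma gderiv_nonneg {p q v : ℝ} (hp : 0 < p) (hq : 0 < q) (hpq : p + q = 1)
    (hv : 0 < v) :
    0 ≤ 2 * p * q * (Real.sinh v / Real.cosh v)
      + (p * (Real.cosh (p * v) / Real.sinh (p * v)) - 1 / v)
      + (q * (Real.cosh (q * v) / Real.sinh (q * v)) - 1 / v)
      - (Real.cosh v / Real.sinh v - 1 / v) := by
  have h1 := step2 hp (by linarith) hv
  have h2 := step2 hq (by linarith) hv
  have hsv := Real.sinh_pos_iff.2 hv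
  have hcv := Real.cosh_pos v
  have h3 : Real.cosh v / Real.sinh v - 1 / v ≤ Real.sinh v / Real.cosh v := by
    rw [div_sub_div _ _ (ne_of_gt hsv) (ne_of_gt hv),
      div_le_div_iff₀ (by positivity) (by positivity)]
    have hvs : v ≤ Real.sinh v * Real.cosh v := by
      have h4 : v ≤ Real.sinh v := Real.self_le_sinh_iff.2 hv.le
      nlinarith [Real.one_le_cosh v]
    nlinarith [Real.cosh_sq v]
  have hq' : q = 1 - p := by linarith
  subst hq'
  nlinarith [mul_nonneg (mul_pos hp hq).le (sub_nonneg.2 h3)]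

private noncomputable def gfun (p q v : ℝ) : ℝ :=
  2 * p * q * Real.log (Real.cosh v) + Real.log (Real.sinh (p * v) / (p * v))
    + Real.log (Real.sinh (q * v) / (q * v)) - Real.log (Real.sinh v / v)

private lemma g_hasDeriv {p q v : ℝ} (hp : 0 < p) (hq : 0 < q) (hv : 0 < v) :
    HasDerivAt (gfun p q)
      (2 * p * q * (Real.sinh v / Real.cosh v)
        + (p * (Real.cosh (p * v) / Real.sinh (p * v)) - 1 / v)
        + (q * (Real.cosh (q * v) / Real.sinh (q * v)) - 1 / v)
        - (Real.cosh v / Real.sinh v - 1 / v)) v := by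
  have hsv := Real.sinh_pos_iff.2 hv
  have hsp := Real.sinh_pos_iff.2 (mul_pos hp hv)
  have hsq := Real.sinh_pos_iff.2 (mul_pos hq hv)
  have hcv := Real.cosh_pos v
  -- the version without quotients inside logs
  have hlc : HasDerivAt (fun v : ℝ => 2 * p * q * Real.log (Real.cosh v))
      (2 * p * q * (Real.sinh v / Real.cosh v)) v := by
    have := ((Real.hasDerivAt_cosh v).log (ne_of_gt hcv)).const_mul (2 * p * q)
    convert this using 1 <;> ring
  have hp' : HasDerivAt (fun v : ℝ => p * v) p v := by
    have := (hasDerivAt_id v).const_mul p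
    convert this using 1 <;> first | rfl | simp
  have hq' : HasDerivAt (fun v : ℝ => q * v) q v := by
    have := (hasDerivAt_id v).const_mul q
    convert this using 1 <;> first | rfl | simp
  have hlp : HasDerivAt (fun v : ℝ => Real.log (Real.sinh (p * v)) - Real.log (p * v))
      (Real.cosh (p * v) * p / Real.sinh (p * v) - p / (p * v)) v :=
    (hp'.sinh.log (ne_of_gt hsp)).sub (hp'.log (ne_of_gt (mul_pos hp hv)))
  have hlq : HasDerivAt (fun v : ℝ => Real.log (Real.sinh (q * v)) - Real.log (q * v))
      (Real.cosh (q * v) * q / Real.sinh (q * v) - q / (q * v)) v :=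
    (hq'.sinh.log (ne_of_gt hsq)).sub (hq'.log (ne_of_gt (mul_pos hq hv)))
  have hlv : HasDerivAt (fun v : ℝ => Real.log (Real.sinh v) - Real.log v)
      (Real.cosh v / Real.sinh v - 1 / v) v := by
    have h1 := (Real.hasDerivAt_sinh v).log (ne_of_gt hsv)
    have h2 := (hasDerivAt_id v).log (ne_of_gt hv)
    have := h1.sub h2
    convert this using 1 <;> first | rfl | simp
  have htot := ((hlc.add hlp).add hlq).sub hlv
  have heq : (fun v : ℝ => 2 * p * q * Real.log (Real.cosh v)
      + (Real.log (Real.sinh (p * v)) - Real.log (p * v))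
      + (Real.log (Real.sinh (q * v)) - Real.log (q * v))
      - (Real.log (Real.sinh v) - Real.log v)) =ᶠ[nhds v] gfun p q := by
    filter_upwards [Ioi_mem_nhds hv] with t ht
    have h1 := Real.sinh_pos_iff.2 (mul_pos hp ht)
    have h2 := Real.sinh_pos_iff.2 (mul_pos hq ht)
    have h3 := Real.sinh_pos_iff.2 ht
    simp only [gfun]
    rw [Real.log_div (ne_of_gt h1) (ne_of_gt (mul_pos hp ht)),
      Real.log_div (ne_of_gt h2) (ne_of_gt (mul_pos hq ht)),
      Real.log_div (ne_of_gt h3) (ne_of_gt ht)]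
  have := htot.congr_of_eventuallyEq heq.symm
  convert this using 1 <;> first | rfl | field_simp

private lemma g_mono {p q : ℝ} (hp : 0 < p) (hq : 0 < q) (hpq : p + q = 1) :
    MonotoneOn (gfun p q) (Set.Ioi 0) := by
  apply monotoneOn_of_deriv_nonneg (convex_Ioi 0)
  · exact fun v hv => (g_hasDeriv hp hq hv).continuousAt.continuousWithinAt
  · intro v hv
    rw [interior_Ioi] at hv
    exact (g_hasDeriv hp hq hv).differentiableAt.differentiableWithinAt
  · intro v hv
    rw [interior_Ioi, Set.mem_Ioi] at hv
    rw [(g_hasDeriv hp hq hv).deriv]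
    exact gderiv_nonneg hp hq hpq hv

private lemma sinh_div_tendsto : Filter.Tendsto (fun w : ℝ => Real.sinh w / w)
    (nhdsWithin 0 {(0:ℝ)}ᶜ) (nhds 1) := by
  have h := Real.hasDerivAt_sinh 0
  rw [hasDerivAt_iff_tendsto_slope] at h
  rw [Real.cosh_zero] at h
  refine h.congr fun w => ?_
  rw [slope_def_field]
  simp

private lemma mul_tendsto {p : ℝ} (hp : 0 < p) : Filter.Tendsto (fun v : ℝ => p * v)
    (nhdsWithin 0 (Set.Ioi 0)) (nhdsWithin 0 {(0:ℝ)}ᶜ) := by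
  apply tendsto_nhdsWithin_of_tendsto_nhds_of_eventually_within
  · have hcont : Continuous (fun v : ℝ => p * v) := continuous_const.mul continuous_id
    have h2 : Filter.Tendsto (fun v : ℝ => p * v) (nhds 0) (nhds (p * 0)) := hcont.tendsto 0
    rw [mul_zero] at h2
    exact h2.mono_left nhdsWithin_le_nhds
  · filter_upwards [self_mem_nhdsWithin] with v hv
    exact (mul_pos hp hv).ne'

private lemma g_tendsto {p q : ℝ} (hp : 0 < p) (hq : 0 < q) :
    Filter.Tendsto (gfun p q) (nhdsWithin 0 (Set.Ioi 0)) (nhds 0) := by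
  have hlog1 : Filter.Tendsto Real.log (nhds 1) (nhds 0) := by
    have := (Real.continuousAt_log one_ne_zero).tendsto
    rwa [Real.log_one] at this
  have t1 : Filter.Tendsto (fun v : ℝ => 2 * p * q * Real.log (Real.cosh v))
      (nhdsWithin 0 (Set.Ioi 0)) (nhds 0) := by
    have hc : Filter.Tendsto (fun v : ℝ => Real.cosh v) (nhds 0) (nhds 1) := by
      have := Real.continuous_cosh.tendsto (0:ℝ)
      rwa [Real.cosh_zero] at this
    have := (hlog1.comp hc).const_mul (2 * p * q)
    have h0 : (2 * p * q) * (0:ℝ) = 0 := by ring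
    rw [h0] at this
    exact (this.mono_left nhdsWithin_le_nhds)
  have t2 : ∀ r : ℝ, 0 < r → Filter.Tendsto (fun v : ℝ => Real.log (Real.sinh (r * v) / (r * v)))
      (nhdsWithin 0 (Set.Ioi 0)) (nhds 0) := fun r hr =>
    hlog1.comp (sinh_div_tendsto.comp (mul_tendsto hr))
  have t4 : Filter.Tendsto (fun v : ℝ => Real.log (Real.sinh v / v))
      (nhdsWithin 0 (Set.Ioi 0)) (nhds 0) := by
    have := t2 1 one_pos
    simpa using this
  have tt := ((t1.add (t2 p hp)).add (t2 q hq)).sub t4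
  have tt' : Filter.Tendsto (gfun p q) (nhdsWithin 0 (Set.Ioi 0))
      (nhds (0 + 0 + 0 - 0)) := tt
  simpa using tt'

private lemma g_nonneg {p q v : ℝ} (hp : 0 < p) (hq : 0 < q) (hpq : p + q = 1)
    (hv : 0 < v) : 0 ≤ gfun p q v := by
  have hmem : Set.Ioo (0:ℝ) v ∈ nhdsWithin (0:ℝ) (Set.Ioi 0) :=
    Ioo_mem_nhdsGT_of_mem ⟨le_refl 0, hv⟩
  refine le_of_tendsto (g_tendsto hp hq) ?_
  filter_upwards [hmem] with w hw
  exact g_mono hp hq hpq (Set.mem_Ioi.2 hw.1) (Set.mem_Ioi.2 hv) hw.2.le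

-- Main scalar inequality, positive case
private lemma main_pos {p q v : ℝ} (hp : 0 < p) (hq : 0 < q) (hpq : p + q = 1)
    (hv : 0 < v) :
    p * q * (v * Real.sinh v) ≤
      Real.cosh v ^ (2 * (p * q)) * (Real.sinh (p * v) * Real.sinh (q * v)) := by
  have hg := g_nonneg hp hq hpq hv
  have hsv := Real.sinh_pos_iff.2 hv
  have hsp := Real.sinh_pos_iff.2 (mul_pos hp hv)
  have hsq := Real.sinh_pos_iff.2 (mul_pos hq hv)
  have hcv := Real.cosh_pos v
  have hexp := Real.exp_le_exp.2 hg
  rw [Real.exp_zero] at hexp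
  have hE : Real.exp (gfun p q v)
      = Real.cosh v ^ (2 * (p * q)) *
        ((Real.sinh (p * v) / (p * v)) * (Real.sinh (q * v) / (q * v)) / (Real.sinh v / v)) := by
    simp only [gfun]
    rw [Real.exp_sub, Real.exp_add, Real.exp_add,
      Real.exp_log (by positivity), Real.exp_log (by positivity),
      Real.exp_log (by positivity),
      Real.rpow_def_of_pos hcv]
    ring_nf
  rw [hE] at hexp
  have hC : 0 < Real.cosh v ^ (2 * (p * q)) := Real.rpow_pos_of_pos hcv _
  have hrw : Real.cosh v ^ (2 * (p * q)) *
      ((Real.sinh (p * v) / (p * v)) * (Real.sinh (q * v) / (q * v)) / (Real.sinh v / v))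
      = (Real.cosh v ^ (2 * (p * q)) * (Real.sinh (p * v) * Real.sinh (q * v)))
        / (p * q * (v * Real.sinh v)) := by
    field_simp
  rw [hrw, le_div_iff₀ (by positivity)] at hexp
  linarith

private lemma main_ne {p q v : ℝ} (hp : 0 < p) (hq : 0 < q) (hpq : p + q = 1)
    (hv : v ≠ 0) :
    p * q * (v * Real.sinh v) ≤
      Real.cosh v ^ (2 * (p * q)) * (Real.sinh (p * v) * Real.sinh (q * v)) := by
  rcases hv.lt_or_gt with h | h
  · have hmain := main_pos hp hq hpq (neg_pos.2 h)
    have e1 : -v * Real.sinh (-v) = v * Real.sinh v := by rw [Real.sinh_neg]; ring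
    have e2 : Real.sinh (p * -v) = -Real.sinh (p * v) := by
      rw [show p * -v = -(p * v) by ring, Real.sinh_neg]
    have e3 : Real.sinh (q * -v) = -Real.sinh (q * v) := by
      rw [show q * -v = -(q * v) by ring, Real.sinh_neg]
    rw [e1, e2, e3, Real.cosh_neg, neg_mul_neg] at hmain
    exact hmain
  · exact main_pos hp hq hpq h


theorem wyd_two_var_le_kantorovich_log_mean (x y p : ℝ) (hx : 0 < x) (hy : 0 < y)
    (hxy : x ≠ y) (hp0 : 0 < p) (hp1 : p < 1) :
    p * (1 - p) * (x - y) ^ 2 / ((x ^ p - y ^ p) * (x ^ (1 - p) - y ^ (1 - p))) ≤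
      ((x / y + 1) ^ 2 / (4 * (x / y))) ^ (p * (1 - p)) *
        ((x - y) / (Real.log x - Real.log y)) := by
  have hq : 0 < 1 - p := by linarith
  set m := (Real.log x + Real.log y) / 2 with hm
  set u := (Real.log x - Real.log y) / 2 with hu
  have hlx : Real.log x = m + u := by rw [hm, hu]; ring
  have hly : Real.log y = m - u := by rw [hm, hu]; ring
  have hu0 : u ≠ 0 := by
    intro h
    apply hxy
    have hloge : Real.log x = Real.log y := by rw [hlx, hly, h]; ring
    calc x = Real.exp (Real.log x) := (Real.exp_log hx).symm
      _ = Real.exp (Real.log y) := by rw [hloge]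
      _ = y := Real.exp_log hy
  have hxe : x = Real.exp (m + u) := by rw [← hlx, Real.exp_log hx]
  have hye : y = Real.exp (m - u) := by rw [← hly, Real.exp_log hy]
  have hexne := Real.exp_ne_zero u
  have h1 : x - y = Real.exp m * (2 * Real.sinh u) := by
    rw [hxe, hye, Real.sinh_eq, show m - u = m + -u by ring, Real.exp_add, Real.exp_add,
      Real.exp_neg]
    field_simp
  have h2 : x ^ p - y ^ p = Real.exp (p * m) * (2 * Real.sinh (p * u)) := by
    rw [Real.rpow_def_of_pos hx, Real.rpow_def_of_pos hy, hlx, hly, Real.sinh_eq,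
      show (m + u) * p = p * m + p * u by ring, show (m - u) * p = p * m + -(p * u) by ring,
      Real.exp_add, Real.exp_add, Real.exp_neg]
    field_simp
  have h3 : x ^ (1 - p) - y ^ (1 - p)
      = Real.exp ((1 - p) * m) * (2 * Real.sinh ((1 - p) * u)) := by
    rw [Real.rpow_def_of_pos hx, Real.rpow_def_of_pos hy, hlx, hly, Real.sinh_eq,
      show (m + u) * (1 - p) = (1 - p) * m + (1 - p) * u by ring,
      show (m - u) * (1 - p) = (1 - p) * m + -((1 - p) * u) by ring,
      Real.exp_add, Real.exp_add, Real.exp_neg]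
    field_simp
  have h4 : Real.log x - Real.log y = 2 * u := by rw [hlx, hly]; ring
  have h5 : (x / y + 1) ^ 2 / (4 * (x / y)) = Real.cosh u ^ 2 := by
    have hxy' : x / y = Real.exp (2 * u) := by
      rw [hxe, hye, ← Real.exp_sub, show m + u - (m - u) = 2 * u by ring]
    rw [hxy', Real.cosh_eq, show (2 : ℝ) * u = u + u by ring, Real.exp_add, Real.exp_neg]
    field_simp
    ring
  rw [h1, h2, h3, h4, h5]
  have h6 : (Real.cosh u ^ 2) ^ (p * (1 - p)) = Real.cosh u ^ (2 * (p * (1 - p))) := by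
    rw [← Real.rpow_natCast (Real.cosh u) 2, ← Real.rpow_mul (Real.cosh_pos u).le]
    norm_num
  rw [h6]
  have hM := main_ne hp0 hq (by ring) hu0
  have hP : 0 < Real.sinh (p * u) * Real.sinh ((1 - p) * u) := by
    rcases hu0.lt_or_gt with h | h
    · have ha : Real.sinh (p * u) < 0 := Real.sinh_neg_iff.2 (mul_neg_of_pos_of_neg hp0 h)
      have hb : Real.sinh ((1 - p) * u) < 0 := Real.sinh_neg_iff.2 (mul_neg_of_pos_of_neg hq h)
      exact mul_pos_of_neg_of_neg ha hb
    · exact mul_pos (Real.sinh_pos_iff.2 (mul_pos hp0 h)) (Real.sinh_pos_iff.2 (mul_pos hq h))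
  have hus : 0 < u * Real.sinh u := by
    rcases hu0.lt_or_gt with h | h
    · exact mul_pos_of_neg_of_neg h (Real.sinh_neg_iff.2 h)
    · exact mul_pos h (Real.sinh_pos_iff.2 h)
  have hS : 0 < Real.sinh u / u := by
    have e : Real.sinh u / u = u * Real.sinh u / u ^ 2 := by
      rw [pow_two, mul_div_mul_left _ _ hu0]
    rw [e]
    exact div_pos hus (by positivity)
  have hden : 0 < Real.exp (p * m) * (2 * Real.sinh (p * u))
      * (Real.exp ((1 - p) * m) * (2 * Real.sinh ((1 - p) * u))) := by
    have e : Real.exp (p * m) * (2 * Real.sinh (p * u))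
        * (Real.exp ((1 - p) * m) * (2 * Real.sinh ((1 - p) * u)))
        = Real.exp (p * m) * Real.exp ((1 - p) * m)
          * (4 * (Real.sinh (p * u) * Real.sinh ((1 - p) * u))) := by ring
    rw [e]
    exact mul_pos (mul_pos (Real.exp_pos _) (Real.exp_pos _)) (by linarith)
  rw [div_le_iff₀ hden]
  have e2u : Real.exp m * (2 * Real.sinh u) / (2 * u) = Real.exp m * (Real.sinh u / u) := by
    rw [mul_div_assoc, mul_div_mul_left _ _ (two_ne_zero)]
  rw [e2u]
  have eexp : Real.exp (p * m) * Real.exp ((1 - p) * m) = Real.exp m := by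
    rw [← Real.exp_add]
    ring_nf
  calc p * (1 - p) * (Real.exp m * (2 * Real.sinh u)) ^ 2
      = 4 * Real.exp m * Real.exp m * (Real.sinh u / u)
        * (p * (1 - p) * (u * Real.sinh u)) := by
        field_simp
        ring
    _ ≤ 4 * Real.exp m * Real.exp m * (Real.sinh u / u)
        * (Real.cosh u ^ (2 * (p * (1 - p)))
          * (Real.sinh (p * u) * Real.sinh ((1 - p) * u))) := by
        refine mul_le_mul_of_nonneg_left hM ?_
        exact mul_nonneg (by positivity) hS.le
    _ = Real.cosh u ^ (2 * (p * (1 - p))) * (Real.exp m * (Real.sinh u / u))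
        * (Real.exp (p * m) * (2 * Real.sinh (p * u))
          * (Real.exp ((1 - p) * m) * (2 * Real.sinh ((1 - p) * u)))) := by
        rw [← eexp]
        ring
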